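/- In U_q(sl_{n+1}) with q not a root of unity, for the Chevalley generators F_i, F_{i+1} of the negative part (satisfying the quantum Serre relations F_{i+1}² F_i − (q+q^{−1}) F_{i+1} F_i F_{i+1} + F_i F_{i+1}² = 0), the following identity holds in the Ore localization of U_q^−(sl_{n+1}) at F_{i+1}: for every k ∈ ℤ, F_{i+1}^k F_i F_{i+1}^{−k} = {k} F_{i+1} F_i F_{i+1}^{−1} + {1−k} F_i, where {k} = (q^k − q^{−k})/(q − q^{−1}). -/

import Mathlib

/-- The symmetric q-number `{k} = (q^k - q^{-k})/(q - q^{-1})`. -/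
noncomputable def symQNum (q : ℂ) (k : ℤ) : ℂ := (q ^ k - q ^ (-k)) / (q - q⁻¹)

/-- in the Ore localization of `U_q⁻(sl_{n+1})` at `F_{i+1}` (q not a root of
unity), where `F_i, F_{i+1}` satisfy the quantum Serre relations, one has for every `k ∈ ℤ`:
`F_{i+1}^k F_i F_{i+1}^{-k} = {k} F_{i+1} F_i F_{i+1}^{-1} + {1-k} F_i`. -/
theorem conjugation_by_powers_of_generator
    (A : Type*) [Ring A] [Algebra ℂ A]
    (q : ℂ) (hq : q ≠ 0) (hq_not_root : ∀ k : ℕ, 0 < k → q ^ k ≠ 1)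
    -- `Fi` is the image of `F_i`; the unit `u` is the (invertible) image of `F_{i+1}`
    (Fi : A) (u : Aˣ)
    -- quantum Serre relations between `F_i` and `F_{i+1}`
    (hSerre₁ : (u : A) ^ 2 * Fi - (q + q⁻¹) • ((u : A) * Fi * (u : A)) + Fi * (u : A) ^ 2 = 0)
    (hSerre₂ : Fi ^ 2 * (u : A) - (q + q⁻¹) • (Fi * (u : A) * Fi) + (u : A) * Fi ^ 2 = 0)
    (k : ℤ) :
    ((u ^ k : Aˣ) : A) * Fi * ((u ^ (-k) : Aˣ) : A) =
      symQNum q k • ((u : A) * Fi * ((u⁻¹ : Aˣ) : A)) + symQNum q (1 - k) • Fi := by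
  set v : A := ((u⁻¹ : Aˣ) : A) with hv
  have huv : (u : A) * v = 1 := u.mul_inv
  have hvu : v * (u : A) = 1 := u.inv_mul
  have huv' : ∀ x : A, (u : A) * (v * x) = x := fun x => by
    rw [← mul_assoc, huv, one_mul]
  have hvu' : ∀ x : A, v * ((u : A) * x) = x := fun x => by
    rw [← mul_assoc, hvu, one_mul]
  have hd : q - q⁻¹ ≠ 0 := by
    intro h
    apply hq_not_root 2 (by norm_num)
    have hqq : q = q⁻¹ := sub_eq_zero.mp h
    calc q ^ 2 = q * q := sq q
      _ = q * q⁻¹ := by nth_rewrite 2 [hqq]; rfl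
      _ = 1 := mul_inv_cancel₀ hq
  -- q-number identities
  have hrec : ∀ m : ℤ, symQNum q (m + 1) = (q + q⁻¹) * symQNum q m - symQNum q (m - 1) := by
    intro m
    unfold symQNum
    rw [← mul_div_assoc, div_sub_div_same]
    congr 1
    have e1 : q ^ (m + 1) = q ^ m * q := by
      rw [zpow_add₀ hq, zpow_one]
    have e2 : q ^ (-(m + 1)) = q ^ (-m) * q⁻¹ := by
      rw [neg_add, zpow_add₀ hq, zpow_neg_one]
    have e3 : q ^ (m - 1) = q ^ m * q⁻¹ := by
      rw [sub_eq_add_neg, zpow_add₀ hq, zpow_neg_one]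
    have e4 : q ^ (-(m - 1)) = q ^ (-m) * q := by
      rw [show -(m - 1) = -m + 1 by ring, zpow_add₀ hq, zpow_one]
    rw [e1, e2, e3, e4]; ring
  have hneg : ∀ m : ℤ, symQNum q (-m) = - symQNum q m := by
    intro m
    unfold symQNum
    rw [neg_neg, ← neg_div, neg_sub]
  have h0 : symQNum q 0 = 0 := by simp [symQNum]
  have h1q : symQNum q 1 = 1 := by
    unfold symQNum
    rw [zpow_one, zpow_neg_one]
    exact div_self hd
  -- algebra identities
  have h1 : (u : A) ^ 2 * Fi + Fi * (u : A) ^ 2 = (q + q⁻¹) • ((u : A) * Fi * (u : A)) := by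
    have h := hSerre₁
    rw [sub_add_eq_add_sub, sub_eq_zero] at h
    exact h
  set X : A := (u : A) * Fi * v with hXd
  have hSX : (u : A) * X * v = (q + q⁻¹) • X - Fi := by
    rw [eq_sub_iff_add_eq, hXd]
    have h2 := congrArg (· * (v * v)) h1
    simp only [add_mul, smul_mul_assoc, pow_two, mul_assoc, huv', hvu', huv, hvu,
      mul_one, one_mul] at h2 ⊢
    convert h2 using 2
  have hSY : v * Fi * (u : A) = (q + q⁻¹) • Fi - X := by
    rw [eq_sub_iff_add_eq, hXd]
    have h2 := congrArg (fun z => v * z * v) h1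
    simp only [mul_add, add_mul, mul_smul_comm, smul_mul_assoc, pow_two, mul_assoc,
      huv', hvu', huv, hvu, mul_one, one_mul] at h2
    simp only [mul_assoc]
    rw [add_comm]
    exact h2
  have hvXu : v * X * (u : A) = Fi := by
    rw [hXd]
    simp only [mul_assoc, huv', hvu', huv, hvu, mul_one, one_mul]
  -- translation of powers
  have hsucc : ∀ m : ℤ,
      ((u ^ (m + 1) : Aˣ) : A) * Fi * ((u ^ (-(m + 1)) : Aˣ) : A)
        = (u : A) * (((u ^ m : Aˣ) : A) * Fi * ((u ^ (-m) : Aˣ) : A)) * v := by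
    intro m
    have e1 : u ^ (m + 1) = u * u ^ m := by rw [add_comm, zpow_add, zpow_one]
    have e2 : u ^ (-(m + 1)) = u ^ (-m) * u⁻¹ := by
      rw [neg_add, zpow_add, zpow_neg_one]
    rw [e1, e2]
    simp [Units.val_mul, mul_assoc, hv]
  have hpred : ∀ m : ℤ,
      ((u ^ (m - 1) : Aˣ) : A) * Fi * ((u ^ (-(m - 1)) : Aˣ) : A)
        = v * (((u ^ m : Aˣ) : A) * Fi * ((u ^ (-m) : Aˣ) : A)) * (u : A) := by
    intro m
    have e1 : u ^ (m - 1) = u⁻¹ * u ^ m := by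
      rw [sub_eq_add_neg, add_comm, zpow_add, zpow_neg_one]
    have e2 : u ^ (-(m - 1)) = u ^ (-m) * u := by
      rw [show -(m - 1) = -m + 1 by ring, zpow_add, zpow_one]
    rw [e1, e2]
    simp [Units.val_mul, mul_assoc, hv]
  have hexp : ∀ (a b : ℂ) (x y w z : A),
      w * (a • x + b • y) * z = a • (w * x * z) + b • (w * y * z) := by
    intros a b x y w z
    simp [mul_add, add_mul, mul_smul_comm, smul_mul_assoc]
  -- main induction
  induction k using Int.induction_on with
  | zero =>
      simp [h0, h1q]
  | succ m ih =>
      rw [hsucc, ih, hexp, hSX, ← hXd]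
      have c1 : symQNum q (↑m + 1)
          = (q + q⁻¹) * symQNum q ↑m + symQNum q (1 - ↑m) := by
        have h := hrec ↑m
        have h' := hneg ((m : ℤ) - 1)
        rw [show -((m : ℤ) - 1) = 1 - ↑m by ring] at h'
        rw [h, h']; ring
      have c2 : symQNum q (1 - (↑m + 1)) = - symQNum q ↑m := by
        rw [show (1 : ℤ) - (↑m + 1) = -↑m by ring, hneg]
      rw [c1, c2]
      module
  | pred m ih =>
      rw [show (-(m : ℤ) - 1) = (-(m : ℤ)) - 1 from rfl] at *
      rw [hpred, ih, hexp, hvXu, hSY]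
      have c1 : symQNum q (-↑m - 1) = - symQNum q (1 - -↑m) := by
        rw [show (1 : ℤ) - -↑m = ↑m + 1 by ring,
          show (-(m : ℤ) - 1) = -(↑m + 1) by ring, hneg]
      have c2 : symQNum q (1 - (-↑m - 1))
          = symQNum q (-↑m) + (q + q⁻¹) * symQNum q (1 - -↑m) := by
        rw [show (1 : ℤ) - (-↑m - 1) = (↑m + 1) + 1 by ring,
          show (1 : ℤ) - -↑m = ↑m + 1 by ring, hrec (↑m + 1),
          show ((m : ℤ) + 1) - 1 = ↑m by ring, hneg]
        ring
      rw [c1, c2]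
      module
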